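/- Dynamics on the separatrix branch W₂ (trajectories through the focus (−c, 0)): let ξ₀ > 0, let φ₀ = 2 arctan ξ₀ ∈ (0, π), and let θ₀ ∈ (0, π/2) be the unique angle with tan θ₀ = b(1 + ξ₀²)/(2 c ξ₀). Then for every integer n ≥ 0, the n-th iterate of the static billiard map satisfies B_sⁿ(φ₀, θ₀) = (φ_n, θ_n) (mod π), where φ_n = 2 arctan(λ^{−n} ξ₀) and θ_n ∈ (0, π/2) is the unique angle with tan θ_n = b(1 + λ^{−2n} ξ₀²)/(2 c λ^{−n} ξ₀). -/

import Mathlib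

open Real

lemma sin_two_arctan (x : ℝ) : Real.sin (2 * Real.arctan x) = 2 * x / (1 + x ^ 2) := by
  have h : Real.sqrt (1 + x ^ 2) * Real.sqrt (1 + x ^ 2) = 1 + x ^ 2 :=
    Real.mul_self_sqrt (by positivity)
  have h0 : Real.sqrt (1 + x ^ 2) ≠ 0 := by positivity
  rw [Real.sin_two_mul, Real.sin_arctan, Real.cos_arctan]
  field_simp
  rw [Real.sq_sqrt (by positivity)]

lemma cos_two_arctan (x : ℝ) : Real.cos (2 * Real.arctan x) = (1 - x ^ 2) / (1 + x ^ 2) := by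
  have h : Real.sqrt (1 + x ^ 2) ^ 2 = 1 + x ^ 2 := Real.sq_sqrt (by positivity)
  have h0 : Real.sqrt (1 + x ^ 2) ≠ 0 := by positivity
  rw [Real.cos_two_mul, Real.cos_arctan]
  field_simp
  linarith [h]

lemma sin_arctan_eq (x : ℝ) : Real.sin (Real.arctan x) = x * Real.cos (Real.arctan x) := by
  rw [Real.sin_arctan, Real.cos_arctan]; ring

lemma exists_int_of_sin_sub_eq_zero {x y : ℝ} (h : Real.sin (x - y) = 0) :
    ∃ k : ℤ, x = y + k * Real.pi := by
  obtain ⟨n, hn⟩ := Real.sin_eq_zero_iff.1 h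
  exact ⟨n, by linarith⟩

lemma tan_two_arctan (x : ℝ) : Real.tan (2 * Real.arctan x) = 2 * x / (1 - x ^ 2) := by
  rw [Real.tan_two_mul, Real.tan_arctan]

lemma one_sub_sq_ne_zero {x : ℝ} (hx : 0 < x) (hx1 : x ≠ 1) : 1 - x ^ 2 ≠ 0 := by
  intro h
  have h2 : (x - 1) * (x + 1) = 0 := by linear_combination -h
  rcases mul_eq_zero.1 h2 with h3 | h3
  · exact hx1 (by linarith)
  · linarith

lemma cos_shift_ne_zero {x : ℝ} (k : ℤ) (h : Real.cos x ≠ 0) :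
    Real.cos (x + k * Real.pi) ≠ 0 := by
  rw [Real.cos_add_int_mul_pi]
  exact mul_ne_zero (zpow_ne_zero _ (by norm_num)) h

lemma sin_shift_ne_zero {x : ℝ} (k : ℤ) (h : Real.sin x ≠ 0) :
    Real.sin (x + k * Real.pi) ≠ 0 := by
  rw [Real.sin_add_int_mul_pi]
  exact mul_ne_zero (zpow_ne_zero _ (by norm_num)) h

lemma step_generic
    (a b c lam : ℝ) (hb : 0 < b) (hab : b < a)
    (hc0 : 0 < c) (hca : c < a) (hb2 : b ^ 2 = a ^ 2 - c ^ 2)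
    (hlam : lam = (a + c) / (a - c))
    (Bs : ℝ × ℝ → ℝ × ℝ)
    (hBs1 : ∀ φ θ : ℝ, Real.cos φ ≠ 0 → Real.cos θ ≠ 0 →
      b - a * Real.tan φ * Real.tan θ ≠ 0 →
      ∃ k : ℤ, (Bs (φ, θ)).1 = -φ + 2 * Real.arctan (b * (a * Real.tan φ + b * Real.tan θ) /
        (a * (b - a * Real.tan φ * Real.tan θ))) + k * Real.pi)
    (hBs2 : ∀ φ θ : ℝ, Real.cos φ ≠ 0 → Real.cos θ ≠ 0 →
      b - a * Real.tan φ * Real.tan θ ≠ 0 → Real.sin φ ≠ 0 →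
      Real.cos ((Bs (φ, θ)).1) ≠ 0 → Real.sin ((Bs (φ, θ)).1) ≠ 0 →
      ∃ k : ℤ, (Bs (φ, θ)).2 = -θ + Real.arctan (b / (a * Real.tan φ))
        - Real.arctan (b / (a * Real.tan ((Bs (φ, θ)).1))) + k * Real.pi)
    (ξ : ℝ) (hξ : 0 < ξ) (hξ1 : ξ ≠ 1) (hξlam : ξ ≠ lam) (k l : ℤ) :
    Real.sin ((Bs (2 * Real.arctan ξ + k * Real.pi,
        Real.arctan (b * (1 + ξ ^ 2) / (2 * c * ξ)) + l * Real.pi)).1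
        - 2 * Real.arctan (ξ / lam)) = 0 ∧
    Real.sin ((Bs (2 * Real.arctan ξ + k * Real.pi,
        Real.arctan (b * (1 + ξ ^ 2) / (2 * c * ξ)) + l * Real.pi)).2
        - Real.arctan (b * (1 + (ξ / lam) ^ 2) / (2 * c * (ξ / lam)))) = 0 := by
  have hac1 : 0 < a - c := by linarith
  have hac2 : 0 < a + c := by linarith
  have ha : 0 < a := by linarith
  have hlam1 : 1 < lam := by
    rw [hlam]; rw [lt_div_iff₀ hac1]; linarith
  have hlam0 : (0:ℝ) < lam := by linarith
  set ξ' : ℝ := ξ / lam with hξ'def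
  have hξ'0 : 0 < ξ' := div_pos hξ hlam0
  have hξ'1 : ξ' ≠ 1 := by
    intro h
    apply hξlam
    field_simp [hξ'def] at h
    rw [hξ'def, div_eq_one_iff_eq hlam0.ne'] at h
    linarith
  have h1ξ : 1 - ξ ^ 2 ≠ 0 := one_sub_sq_ne_zero hξ hξ1
  have h1ξ' : 1 - ξ' ^ 2 ≠ 0 := one_sub_sq_ne_zero hξ'0 hξ'1
  set T : ℝ := b * (1 + ξ ^ 2) / (2 * c * ξ) with hTdef
  set T' : ℝ := b * (1 + ξ' ^ 2) / (2 * c * ξ') with hT'def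
  set Φ : ℝ := 2 * Real.arctan ξ + k * Real.pi with hΦdef
  set Θ : ℝ := Real.arctan T + l * Real.pi with hΘdef
  have htanΦ : Real.tan Φ = 2 * ξ / (1 - ξ ^ 2) := by
    rw [hΦdef, Real.tan_add_int_mul_pi, tan_two_arctan]
  have hcosΦ : Real.cos Φ ≠ 0 := by
    apply cos_shift_ne_zero
    rw [cos_two_arctan]
    exact div_ne_zero h1ξ (by positivity)
  have hsinΦ : Real.sin Φ ≠ 0 := by
    apply sin_shift_ne_zero
    rw [sin_two_arctan]
    positivity
  have htanΘ : Real.tan Θ = T := by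
    rw [hΘdef, Real.tan_add_int_mul_pi, Real.tan_arctan]
  have hcosΘ : Real.cos Θ ≠ 0 := cos_shift_ne_zero l (Real.cos_arctan_pos T).ne'
  have hDval : b - a * (2 * ξ / (1 - ξ ^ 2)) * T ≠ 0 := by
    rw [hTdef]
    have hval : b - a * (2 * ξ / (1 - ξ ^ 2)) * (b * (1 + ξ ^ 2) / (2 * c * ξ))
        = b * ((c - a) - (c + a) * ξ ^ 2) / (c * (1 - ξ ^ 2)) := by
      field_simp
      ring
    rw [hval]
    apply div_ne_zero
    · have : (c - a) - (c + a) * ξ ^ 2 < 0 := by nlinarith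
      exact mul_ne_zero hb.ne' this.ne
    · exact mul_ne_zero hc0.ne' h1ξ
  have hDne : b - a * Real.tan Φ * Real.tan Θ ≠ 0 := by
    rw [htanΦ, htanΘ]; exact hDval
  obtain ⟨k1, hk1⟩ := hBs1 Φ Θ hcosΦ hcosΘ hDne
  rw [htanΦ, htanΘ] at hk1
  have hr : b * (a * (2 * ξ / (1 - ξ ^ 2)) + b * T) /
      (a * (b - a * (2 * ξ / (1 - ξ ^ 2)) * T))
      = ((a - c) * ξ ^ 2 - (a + c)) / (2 * a * ξ) := by
    rw [div_eq_div_iff (mul_ne_zero ha.ne' hDval) (by positivity : (2 * a * ξ) ≠ 0), hTdef]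
    field_simp
    linear_combination (1 - ξ^4) * hb2
  rw [hr] at hk1
  set R : ℝ := ((a - c) * ξ ^ 2 - (a + c)) / (2 * a * ξ) with hRdef
  have scalar1 : 1 - ξ * ξ' + R * (ξ + ξ') = 0 := by
    rw [hRdef, hξ'def, hlam]
    field_simp
    ring
  have key1 : Real.cos (Real.arctan R - (Real.arctan ξ + Real.arctan ξ')) = 0 := by
    have : Real.cos (Real.arctan R - (Real.arctan ξ + Real.arctan ξ'))
        = Real.cos (Real.arctan R) * Real.cos (Real.arctan ξ) * Real.cos (Real.arctan ξ')
          * (1 - ξ * ξ' + R * (ξ + ξ')) := by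
      rw [Real.cos_sub, Real.cos_add, Real.sin_add, sin_arctan_eq R, sin_arctan_eq ξ,
        sin_arctan_eq ξ']
      ring
    rw [this, scalar1, mul_zero]
  have goal1 : Real.sin ((Bs (Φ, Θ)).1 - 2 * Real.arctan ξ') = 0 := by
    have hsplit : (Bs (Φ, Θ)).1 - 2 * Real.arctan ξ'
        = 2 * (Real.arctan R - (Real.arctan ξ + Real.arctan ξ')) + ((k1 - k : ℤ) : ℝ) * Real.pi := by
      rw [hk1, hΦdef]
      push_cast
      ring
    rw [hsplit, Real.sin_add_int_mul_pi, Real.sin_two_mul, key1]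
    ring
  refine ⟨goal1, ?_⟩
  -- component 2
  obtain ⟨k', hk'⟩ := exists_int_of_sin_sub_eq_zero goal1
  have hcosΦ' : Real.cos ((Bs (Φ, Θ)).1) ≠ 0 := by
    rw [hk']
    apply cos_shift_ne_zero
    rw [cos_two_arctan]
    exact div_ne_zero h1ξ' (by positivity)
  have hsinΦ' : Real.sin ((Bs (Φ, Θ)).1) ≠ 0 := by
    rw [hk']
    apply sin_shift_ne_zero
    rw [sin_two_arctan]
    positivity
  have htanΦ' : Real.tan ((Bs (Φ, Θ)).1) = 2 * ξ' / (1 - ξ' ^ 2) := by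
    rw [hk', Real.tan_add_int_mul_pi, tan_two_arctan]
  obtain ⟨k2, hk2⟩ := hBs2 Φ Θ hcosΦ hcosΘ hDne hsinΦ hcosΦ' hsinΦ'
  rw [htanΦ, htanΦ'] at hk2
  have hw : b / (a * (2 * ξ / (1 - ξ ^ 2))) = b * (1 - ξ ^ 2) / (2 * a * ξ) := by
    field_simp
  have hw' : b / (a * (2 * ξ' / (1 - ξ' ^ 2))) = b * (1 - ξ' ^ 2) / (2 * a * ξ') := by
    field_simp
  rw [hw, hw'] at hk2
  set w : ℝ := b * (1 - ξ ^ 2) / (2 * a * ξ) with hwdef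
  set w' : ℝ := b * (1 - ξ' ^ 2) / (2 * a * ξ') with hw'def
  have scalar2 : (w - T) * (1 - w' * T') - (1 + w * T) * (w' + T') = 0 := by
    rw [hwdef, hw'def, hTdef, hT'def, hξ'def, hlam]
    field_simp
    linear_combination (8*a*b*c^4*ξ^2 - 8*a*b*c^4*ξ^4 + 8*a^2*b*c^3*ξ^2 + 8*a^2*b*c^3*ξ^4
      + 8*a^3*b*c^2*ξ^2 - 8*a^3*b*c^2*ξ^4 + 8*a^4*b*c*ξ^2 + 8*a^4*b*c*ξ^4) * hb2
  have key2 : Real.sin ((Real.arctan w - Real.arctan T)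
      - (Real.arctan w' + Real.arctan T')) = 0 := by
    have : Real.sin ((Real.arctan w - Real.arctan T)
        - (Real.arctan w' + Real.arctan T'))
        = Real.cos (Real.arctan w) * Real.cos (Real.arctan T) * Real.cos (Real.arctan w')
          * Real.cos (Real.arctan T')
          * ((w - T) * (1 - w' * T') - (1 + w * T) * (w' + T')) := by
      rw [Real.sin_sub, Real.sin_sub, Real.cos_sub, Real.sin_add, Real.cos_add,
        sin_arctan_eq w, sin_arctan_eq T, sin_arctan_eq w', sin_arctan_eq T']
      ring
    rw [this, scalar2, mul_zero]
  have hsplit2 : (Bs (Φ, Θ)).2 - Real.arctan T'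
      = ((Real.arctan w - Real.arctan T) - (Real.arctan w' + Real.arctan T'))
        + ((k2 - l : ℤ) : ℝ) * Real.pi := by
    rw [hk2, hΘdef]
    push_cast
    ring
  rw [hsplit2, Real.sin_add_int_mul_pi, key2]
  ring

lemma step_ext
    (a b c lam : ℝ) (hb : 0 < b) (hab : b < a)
    (hc0 : 0 < c) (hca : c < a) (hb2 : b ^ 2 = a ^ 2 - c ^ 2)
    (hlam : lam = (a + c) / (a - c))
    (Bs : ℝ × ℝ → ℝ × ℝ) (hcont : Continuous Bs)
    (hBs1 : ∀ φ θ : ℝ, Real.cos φ ≠ 0 → Real.cos θ ≠ 0 →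
      b - a * Real.tan φ * Real.tan θ ≠ 0 →
      ∃ k : ℤ, (Bs (φ, θ)).1 = -φ + 2 * Real.arctan (b * (a * Real.tan φ + b * Real.tan θ) /
        (a * (b - a * Real.tan φ * Real.tan θ))) + k * Real.pi)
    (hBs2 : ∀ φ θ : ℝ, Real.cos φ ≠ 0 → Real.cos θ ≠ 0 →
      b - a * Real.tan φ * Real.tan θ ≠ 0 → Real.sin φ ≠ 0 →
      Real.cos ((Bs (φ, θ)).1) ≠ 0 → Real.sin ((Bs (φ, θ)).1) ≠ 0 →
      ∃ k : ℤ, (Bs (φ, θ)).2 = -θ + Real.arctan (b / (a * Real.tan φ))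
        - Real.arctan (b / (a * Real.tan ((Bs (φ, θ)).1))) + k * Real.pi)
    (ξ : ℝ) (hξ : 0 < ξ) (k l : ℤ) :
    ∃ k' l' : ℤ, Bs (2 * Real.arctan ξ + k * Real.pi,
        Real.arctan (b * (1 + ξ ^ 2) / (2 * c * ξ)) + l * Real.pi)
      = (2 * Real.arctan (ξ / lam) + k' * Real.pi,
         Real.arctan (b * (1 + (ξ / lam) ^ 2) / (2 * c * (ξ / lam))) + l' * Real.pi) := by
  have hlam0 : lam ≠ 0 := by
    have hac1 : 0 < a - c := by linarith
    have : 1 < lam := by rw [hlam, lt_div_iff₀ hac1]; linarith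
    linarith
  set F : ℝ → ℝ × ℝ := fun x => Bs (2 * Real.arctan x + k * Real.pi,
      Real.arctan (b * (1 + x ^ 2) / (2 * c * x)) + l * Real.pi) with hF
  set u : ℝ → ℝ := fun x => Real.sin ((F x).1 - 2 * Real.arctan (x / lam)) with hu
  set v : ℝ → ℝ := fun x => Real.sin ((F x).2
      - Real.arctan (b * (1 + (x / lam) ^ 2) / (2 * c * (x / lam)))) with hv
  have hFc : ContinuousAt F ξ := by
    apply (hcont.continuousAt).comp
    apply ContinuousAt.prodMk
    · exact ((continuous_const.mul Real.continuous_arctan).add continuous_const).continuousAt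
    · refine ContinuousAt.add (Real.continuousAt_arctan.comp ?_) continuousAt_const
      exact ContinuousAt.div (by fun_prop) (by fun_prop) (by positivity)
  have huc : ContinuousAt u ξ := by
    apply Real.continuous_sin.continuousAt.comp
    exact hFc.fst.sub ((continuous_const.mul
      (Real.continuous_arctan.comp (continuous_id.div_const lam))).continuousAt)
  have hvc : ContinuousAt v ξ := by
    apply Real.continuous_sin.continuousAt.comp
    refine hFc.snd.sub (Real.continuousAt_arctan.comp ?_)
    refine ContinuousAt.div (by fun_prop) (by fun_prop) ?_
    have : ξ / lam ≠ 0 := div_ne_zero hξ.ne' hlam0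
    positivity
  have hev : ∀ᶠ x in nhdsWithin ξ {ξ}ᶜ, u x = 0 ∧ v x = 0 := by
    have evpos : ∀ᶠ x in nhdsWithin ξ {ξ}ᶜ, 0 < x :=
      eventually_nhdsWithin_of_eventually_nhds (eventually_gt_nhds hξ)
    have evne : ∀ y : ℝ, ∀ᶠ x in nhdsWithin ξ {ξ}ᶜ, x ≠ y := by
      intro y
      rcases eq_or_ne ξ y with rfl | h
      · exact eventually_mem_nhdsWithin
      · exact eventually_nhdsWithin_of_eventually_nhds (eventually_ne_nhds h)
    filter_upwards [evpos, evne 1, evne lam] with x hx h1 h2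
    exact step_generic a b c lam hb hab hc0 hca hb2 hlam Bs hBs1 hBs2 x hx h1 h2 k l
  have hu0 : u ξ = 0 := by
    have h1 : Filter.Tendsto u (nhdsWithin ξ {ξ}ᶜ) (nhds (u ξ)) :=
      (huc.continuousWithinAt (s := {ξ}ᶜ)).tendsto
    have h2 : Filter.Tendsto u (nhdsWithin ξ {ξ}ᶜ) (nhds 0) :=
      Filter.Tendsto.congr' (hev.mono fun x hx => hx.1.symm) tendsto_const_nhds
    exact tendsto_nhds_unique h1 h2
  have hv0 : v ξ = 0 := by
    have h1 : Filter.Tendsto v (nhdsWithin ξ {ξ}ᶜ) (nhds (v ξ)) :=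
      (hvc.continuousWithinAt (s := {ξ}ᶜ)).tendsto
    have h2 : Filter.Tendsto v (nhdsWithin ξ {ξ}ᶜ) (nhds 0) :=
      Filter.Tendsto.congr' (hev.mono fun x hx => hx.2.symm) tendsto_const_nhds
    exact tendsto_nhds_unique h1 h2
  obtain ⟨k', hk'⟩ := exists_int_of_sin_sub_eq_zero hu0
  obtain ⟨l', hl'⟩ := exists_int_of_sin_sub_eq_zero hv0
  exact ⟨k', l', Prod.ext hk' hl'⟩

/-- STATEMENT 1: dynamics of the static elliptic billiard map `B_s` on the separatrix
branch `W₂` (trajectories through the focus `(−c, 0)`).  `Bs` is any (continuous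
extension of the) map given, modulo `π`, by the defining formulas of the static
elliptic billiard map.  Starting from `φ₀ = 2 arctan ξ₀` with `ξ₀ > 0` and
`θ₀ ∈ (0, π/2)` the unique angle with `tan θ₀ = b(1+ξ₀²)/(2cξ₀)`, the `n`-th iterate
equals, modulo `π`, `(φ_n, θ_n)` with `φ_n = 2 arctan (λ⁻ⁿ ξ₀)` and `θ_n ∈ (0, π/2)`
the unique angle with `tan θ_n = b(1+λ^{−2n}ξ₀²)/(2cλ⁻ⁿξ₀)`. -/
theorem separatrix_W2_dynamics
    (a b : ℝ) (hb : 0 < b) (hab : b < a)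
    (c lam : ℝ) (hc : c = Real.sqrt (a ^ 2 - b ^ 2)) (hlam : lam = (a + c) / (a - c))
    (Bs : ℝ × ℝ → ℝ × ℝ) (hcont : Continuous Bs)
    (hBs1 : ∀ φ θ : ℝ, Real.cos φ ≠ 0 → Real.cos θ ≠ 0 →
      b - a * Real.tan φ * Real.tan θ ≠ 0 →
      ∃ k : ℤ, (Bs (φ, θ)).1 = -φ + 2 * Real.arctan (b * (a * Real.tan φ + b * Real.tan θ) /
        (a * (b - a * Real.tan φ * Real.tan θ))) + k * Real.pi)
    (hBs2 : ∀ φ θ : ℝ, Real.cos φ ≠ 0 → Real.cos θ ≠ 0 →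
      b - a * Real.tan φ * Real.tan θ ≠ 0 → Real.sin φ ≠ 0 →
      Real.cos ((Bs (φ, θ)).1) ≠ 0 → Real.sin ((Bs (φ, θ)).1) ≠ 0 →
      ∃ k : ℤ, (Bs (φ, θ)).2 = -θ + Real.arctan (b / (a * Real.tan φ))
        - Real.arctan (b / (a * Real.tan ((Bs (φ, θ)).1))) + k * Real.pi)
    (ξ₀ : ℝ) (hξ₀ : 0 < ξ₀)
    (φ₀ θ₀ : ℝ) (hφ₀ : φ₀ = 2 * Real.arctan ξ₀)
    (hθ₀mem : θ₀ ∈ Set.Ioo 0 (Real.pi / 2))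
    (hθ₀ : Real.tan θ₀ = b * (1 + ξ₀ ^ 2) / (2 * c * ξ₀)) :
    ∀ n : ℕ, ∃ θn ∈ Set.Ioo 0 (Real.pi / 2),
      Real.tan θn = b * (1 + (lam ^ (-(n : ℤ)) * ξ₀) ^ 2) / (2 * c * (lam ^ (-(n : ℤ)) * ξ₀)) ∧
      ∃ k l : ℤ, Bs^[n] (φ₀, θ₀) =
        (2 * Real.arctan (lam ^ (-(n : ℤ)) * ξ₀) + k * Real.pi, θn + l * Real.pi) := by
  intro n
  have ha : 0 < a := lt_trans hb hab
  have hcsq : c ^ 2 = a ^ 2 - b ^ 2 := by rw [hc]; exact Real.sq_sqrt (by nlinarith)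
  have hb2 : b ^ 2 = a ^ 2 - c ^ 2 := by linarith
  have hc0 : 0 < c := by rw [hc]; exact Real.sqrt_pos.2 (by nlinarith)
  have hca : c < a := by nlinarith
  have hlampos : 0 < lam := by
    rw [hlam]
    exact div_pos (by linarith) (by linarith)
  have hlam0 : lam ≠ 0 := hlampos.ne'
  have main : ∀ m : ℕ, ∃ k l : ℤ, Bs^[m] (φ₀, θ₀)
      = (2 * Real.arctan (lam ^ (-(m : ℤ)) * ξ₀) + k * Real.pi,
         Real.arctan (b * (1 + (lam ^ (-(m : ℤ)) * ξ₀) ^ 2)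
           / (2 * c * (lam ^ (-(m : ℤ)) * ξ₀))) + l * Real.pi) := by
    intro m
    induction m with
    | zero =>
      refine ⟨0, 0, ?_⟩
      have h0 : lam ^ (-((0 : ℕ) : ℤ)) * ξ₀ = ξ₀ := by norm_num
      have hθ : Real.arctan (b * (1 + ξ₀ ^ 2) / (2 * c * ξ₀)) = θ₀ := by
        rw [← hθ₀]
        exact Real.arctan_tan (by linarith [hθ₀mem.1, Real.pi_pos]) hθ₀mem.2
      simp [h0, hθ, hφ₀]
    | succ m ih =>
      obtain ⟨k, l, ih⟩ := ih
      obtain ⟨k', l', hstep⟩ := step_ext a b c lam hb hab hc0 hca hb2 hlam Bs hcont hBs1 hBs2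
        (lam ^ (-(m : ℤ)) * ξ₀) (by positivity) k l
      refine ⟨k', l', ?_⟩
      have harg : lam ^ (-(m : ℤ)) * ξ₀ / lam = lam ^ (-((m + 1 : ℕ) : ℤ)) * ξ₀ := by
        push_cast
        rw [show -((m : ℤ) + 1) = -(m : ℤ) + (-1) by ring, zpow_add₀ hlam0, zpow_neg_one]
        field_simp
      rw [Function.iterate_succ_apply', ih, hstep, harg]
  obtain ⟨k, l, hm⟩ := main n
  have hargpos : 0 < b * (1 + (lam ^ (-(n : ℤ)) * ξ₀) ^ 2) / (2 * c * (lam ^ (-(n : ℤ)) * ξ₀)) := by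
    have : 0 < lam ^ (-(n : ℤ)) * ξ₀ := by positivity
    positivity
  refine ⟨Real.arctan (b * (1 + (lam ^ (-(n : ℤ)) * ξ₀) ^ 2)
      / (2 * c * (lam ^ (-(n : ℤ)) * ξ₀))), ⟨?_, Real.arctan_lt_pi_div_two _⟩,
    Real.tan_arctan _, k, l, hm⟩
  rw [← Real.arctan_zero]
  exact Real.arctan_strictMono hargpos
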